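/- arXiv:2405.15009 — 6 statements merged into one kernel-verified Lean document; each statement's English description precedes it below -/
import Mathlib

section
/- Let φ be a positive linear map on a unital C*-algebra A and let s > 0. If the spectral radius of φ satisfies r(φ) < s, then there exists a positive element w ∈ A such that φ(w) = s(w - 1). -/
open Filter

/-- If `φ` is a positive linear map on a unital C*-algebra `A` and `s > 0` satisfies
`r(φ) < s`, then there exists a positive `w ∈ A` with `φ(w) = s(w - 1)`. -/
theorem stmt0 {A : Type*} [CStarAlgebra A] [PartialOrder A] [StarOrderedRing A]
    (φ : A →L[ℂ] A) (hφ : ∀ a : A, 0 ≤ a → 0 ≤ φ a)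
    (s : ℝ) (hs : 0 < s)
    (hr : spectralRadius ℂ φ < ENNReal.ofReal s) :
    ∃ w : A, 0 ≤ w ∧ φ w = (s : ℂ) • (w - 1) := by
  obtain hA | hA := subsingleton_or_nontrivial A
  · exact ⟨0, le_rfl, Subsingleton.elim _ _⟩
  have hfin : spectralRadius ℂ φ ≠ ⊤ := hr.ne_top
  set R := (spectralRadius ℂ φ).toReal with hR
  have hRs : R < s := by
    have := ENNReal.toReal_lt_toReal hfin ENNReal.ofReal_ne_top |>.mpr hr
    rwa [ENNReal.toReal_ofReal hs.le] at this
  set t := (R + s) / 2 with htdef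
  have hR0 : 0 ≤ R := ENNReal.toReal_nonneg
  have ht0 : 0 < t := by positivity
  have hts : t < s := by rw [htdef]; linarith
  have hRt : R < t := by rw [htdef]; linarith
  have hspec : spectralRadius ℂ φ < ENNReal.ofReal t := by
    rw [← ENNReal.ofReal_toReal hfin]
    exact (ENNReal.ofReal_lt_ofReal_iff ht0).mpr hRt
  -- eventual norm bound
  have hev : ∀ᶠ n : ℕ in atTop, ‖φ ^ n‖ ≤ t ^ n := by
    have htd := spectrum.pow_norm_pow_one_div_tendsto_nhds_spectralRadius φ
    have h1 : ∀ᶠ n : ℕ in atTop, ENNReal.ofReal (‖φ ^ n‖ ^ (1 / (n:ℕ) : ℝ)) <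
        ENNReal.ofReal t := htd.eventually_lt_const hspec
    filter_upwards [h1, eventually_ge_atTop 1] with n hn hn1
    have h2 : ‖φ ^ n‖ ^ (1 / (n:ℕ) : ℝ) < t := (ENNReal.ofReal_lt_ofReal_iff ht0).mp hn
    have h3 : (‖φ ^ n‖ ^ (1 / (n:ℕ) : ℝ)) ^ n ≤ t ^ n :=
      pow_le_pow_left₀ (Real.rpow_nonneg (norm_nonneg _) _) h2.le n
    rwa [one_div, Real.rpow_inv_natCast_pow (norm_nonneg _) (by omega)] at h3
  -- summability
  have hsum : Summable (fun n : ℕ => ((s:ℂ)⁻¹) ^ n • ((φ ^ n) 1)) := by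
    refine Summable.of_norm_bounded_eventually_nat (g := fun n => (t / s) ^ n)
      (summable_geometric_of_lt_one (by positivity) (by rw [div_lt_one hs]; exact hts)) ?_
    filter_upwards [hev] with n hn
    have hb : ‖(φ ^ n) 1‖ ≤ ‖φ ^ n‖ := by
      simpa [norm_one] using (φ ^ n).le_opNorm 1
    calc ‖((s:ℂ)⁻¹) ^ n • ((φ ^ n) 1)‖ = (s⁻¹) ^ n * ‖(φ ^ n) 1‖ := by
          rw [norm_smul, norm_pow]
          norm_num [abs_of_pos hs]
      _ ≤ (s⁻¹) ^ n * t ^ n := by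
          apply mul_le_mul_of_nonneg_left (hb.trans hn) (by positivity)
      _ = (t / s) ^ n := by rw [div_eq_mul_inv, mul_pow, mul_comm, inv_pow]
  set f : ℕ → A := fun n => ((s:ℂ)⁻¹) ^ n • ((φ ^ n) 1) with hf
  refine ⟨∑' n, f n, ?_, ?_⟩
  · -- positivity
    refine tsum_nonneg fun n => ?_
    have hpos : 0 ≤ (φ ^ n) 1 := by
      induction n with
      | zero => simpa using (zero_le_one : (0:A) ≤ 1)
      | succ k ih =>
        rw [pow_succ']
        exact hφ _ ih
    show 0 ≤ ((s:ℂ)⁻¹) ^ n • ((φ ^ n) 1)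
    have : ((s:ℂ)⁻¹) ^ n = (((s⁻¹ ^ n : ℝ) : ℂ)) := by push_cast; ring
    rw [this, show ((((s⁻¹ ^ n : ℝ)) : ℂ) • ((φ ^ n) 1)) = (s⁻¹ ^ n : ℝ) • ((φ ^ n) 1)
      from (RCLike.real_smul_eq_coe_smul (K := ℂ) _ _).symm]
    exact smul_nonneg (by positivity) hpos
  · -- the equation
    have hφtsum : φ (∑' n, f n) = ∑' n, φ (f n) := by
      exact (φ.hasSum hsum.hasSum).tsum_eq.symm ▸ (hsum.hasSum.mapL φ).tsum_eq
    have hterm : ∀ n, φ (f n) = ((s:ℂ)⁻¹) ^ n • ((φ ^ (n+1)) 1) := by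
      intro n
      rw [hf]
      simp only [map_smul]
      congr 1
      rw [pow_succ']
      rfl
    have hsplit : ∑' n, f n = f 0 + ∑' n, f (n + 1) := hsum.tsum_eq_zero_add
    have hf0 : f 0 = 1 := by simp [hf]
    have hsum' : Summable fun n => f (n + 1) := (summable_nat_add_iff 1).mpr hsum
    have hsne : (s:ℂ) ≠ 0 := by exact_mod_cast hs.ne'
    rw [hφtsum, hsplit, hf0, add_sub_cancel_left, ← Summable.tsum_const_smul ((s:ℂ)) hsum']
    refine tsum_congr fun n => ?_
    rw [hterm, hf]
    simp only [smul_smul]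
    congr 1
    rw [pow_succ]
    field_simp
end

section
/- Let φ be a positive linear map on a unital C*-algebra A. Then r(φ) = inf { r(w⁻¹ φ(w)) : w ∈ A strictly positive }, where r on the right denotes the spectral radius in A. -/
open scoped NNReal ENNReal ComplexStarModule

section helpers
variable {A : Type*} [CStarAlgebra A] [PartialOrder A] [StarOrderedRing A]

lemma WF_pos_mono (ψ : A →L[ℂ] A) (hψ : ∀ a : A, 0 ≤ a → 0 ≤ ψ a) {a b : A} (h : a ≤ b) :
    ψ a ≤ ψ b :=
  sub_nonneg.1 (by rw [← map_sub]; exact hψ _ (sub_nonneg.2 h))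

lemma WF_sa_bound (ψ : A →L[ℂ] A) (hψ : ∀ a : A, 0 ≤ a → 0 ≤ ψ a) {b : A}
    (hb : IsSelfAdjoint b) : ‖ψ b‖ ≤ 3 * ‖ψ 1‖ * ‖b‖ := by
  have h1 : ψ b ≤ ‖b‖ • ψ 1 := by
    have := WF_pos_mono ψ hψ hb.le_algebraMap_norm_self
    rwa [Algebra.algebraMap_eq_smul_one, ContinuousLinearMap.map_smul_of_tower] at this
  have h2 : -(‖b‖ • ψ 1) ≤ ψ b := by
    have := WF_pos_mono ψ hψ hb.neg_algebraMap_norm_le_self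
    rwa [Algebra.algebraMap_eq_smul_one, map_neg, ContinuousLinearMap.map_smul_of_tower] at this
  have h0 : (0:A) ≤ ψ b + ‖b‖ • ψ 1 := by
    rw [← neg_le_iff_add_nonneg]; exact h2
  have h3 : ψ b + ‖b‖ • ψ 1 ≤ (2 * ‖b‖) • ψ 1 := by
    rw [two_mul, add_smul]; exact add_le_add_left h1 _
  have h4 : ‖ψ b + ‖b‖ • ψ 1‖ ≤ ‖(2 * ‖b‖) • ψ 1‖ :=
    CStarAlgebra.norm_le_norm_of_nonneg_of_le h0 h3
  have h5 : ‖ψ b‖ ≤ ‖ψ b + ‖b‖ • ψ 1‖ + ‖‖b‖ • ψ 1‖ := by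
    simpa using norm_sub_le (ψ b + ‖b‖ • ψ 1) (‖b‖ • ψ 1)
  simp only [norm_smul, Real.norm_eq_abs, abs_mul, abs_two, abs_norm] at h4 h5
  nlinarith [norm_nonneg b, norm_nonneg (ψ 1)]

lemma WF_pos_apply_bound (ψ : A →L[ℂ] A) (hψ : ∀ a : A, 0 ≤ a → 0 ≤ ψ a) (a : A) :
    ‖ψ a‖ ≤ 6 * ‖ψ 1‖ * ‖a‖ := by
  have hra : ‖(ℜ a : A)‖ ≤ ‖a‖ := by
    rw [realPart_apply_coe, norm_smul]
    simp only [norm_inv, Real.norm_ofNat]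
    calc 2⁻¹ * ‖a + star a‖ ≤ 2⁻¹ * (‖a‖ + ‖star a‖) := by
          gcongr; exact norm_add_le _ _
    _ = ‖a‖ := by rw [norm_star]; ring
  have hia : ‖(ℑ a : A)‖ ≤ ‖a‖ := by
    rw [imaginaryPart_apply_coe, norm_smul, norm_smul]
    simp only [norm_neg, Complex.norm_I, one_mul, norm_inv, Real.norm_ofNat]
    calc 2⁻¹ * ‖a - star a‖ ≤ 2⁻¹ * (‖a‖ + ‖star a‖) := by
          gcongr; exact norm_sub_le _ _
    _ = ‖a‖ := by rw [norm_star]; ring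
  have hd : ψ a = ψ (ℜ a : A) + Complex.I • ψ (ℑ a : A) := by
    conv_lhs => rw [← realPart_add_I_smul_imaginaryPart a]
    rw [map_add, map_smul]
  calc ‖ψ a‖ ≤ ‖ψ (ℜ a : A)‖ + ‖Complex.I • ψ (ℑ a : A)‖ := hd ▸ norm_add_le _ _
  _ ≤ 3 * ‖ψ 1‖ * ‖(ℜ a : A)‖ + 3 * ‖ψ 1‖ * ‖(ℑ a : A)‖ := by
      rw [norm_smul, Complex.norm_I, one_mul]
      exact add_le_add (WF_sa_bound ψ hψ (ℜ a).2) (WF_sa_bound ψ hψ (ℑ a).2)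
  _ ≤ 6 * ‖ψ 1‖ * ‖a‖ := by nlinarith [norm_nonneg (ψ 1)]

open Filter in
lemma WF_specrad_le_of_pow_bound {B : Type*} [NormedRing B] [NormedAlgebra ℂ B] [CompleteSpace B]
    (a : B) (C t : ℝ≥0) (h : ∀ n, 1 ≤ n → ‖a ^ n‖₊ ≤ C * t ^ n) :
    spectralRadius ℂ a ≤ t := by
  have hg := spectrum.pow_nnnorm_pow_one_div_tendsto_nhds_spectralRadius a
  refine ENNReal.le_of_forall_lt_one_mul_le fun ε hε => ?_
  rcases eq_or_ne ε 0 with rfl | hε0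
  · simp
  have hεt : ε ≠ ⊤ := (hε.trans ENNReal.one_lt_top).ne
  have hε1 : 1 < ε⁻¹ := ENNReal.one_lt_inv.mpr hε
  have hev : ∀ᶠ n : ℕ in atTop, (C : ℝ≥0∞) ^ (1/n : ℝ) ≤ ε⁻¹ :=
    ENNReal.eventually_pow_one_div_le ENNReal.coe_ne_top hε1
  have hb : ∀ᶠ n : ℕ in atTop, (‖a ^ n‖₊ : ℝ≥0∞) ^ (1/n : ℝ) ≤ ε⁻¹ * t := by
    filter_upwards [hev, Filter.eventually_ge_atTop 1] with n h1 h2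
    have hn : (0:ℝ) ≤ 1/n := by positivity
    have hn0 : (n:ℝ) ≠ 0 := by exact_mod_cast Nat.one_le_iff_ne_zero.mp h2
    calc (‖a ^ n‖₊ : ℝ≥0∞) ^ (1/n:ℝ)
        ≤ ((C * t ^ n : ℝ≥0) : ℝ≥0∞) ^ (1/n:ℝ) :=
          ENNReal.rpow_le_rpow (by exact_mod_cast h n h2) hn
      _ = (C:ℝ≥0∞) ^ (1/n:ℝ) * ((t:ℝ≥0∞) ^ (n:ℝ)) ^ (1/n:ℝ) := by
          push_cast
          rw [ENNReal.mul_rpow_of_nonneg _ _ hn, ENNReal.rpow_natCast]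
      _ = (C:ℝ≥0∞) ^ (1/n:ℝ) * t := by
          rw [← ENNReal.rpow_mul, mul_one_div, div_self hn0, ENNReal.rpow_one]
      _ ≤ ε⁻¹ * t := by gcongr
  have hle : spectralRadius ℂ a ≤ ε⁻¹ * t := le_of_tendsto hg hb
  calc ε * spectralRadius ℂ a ≤ ε * (ε⁻¹ * t) := by gcongr
    _ = t := by rw [← mul_assoc, ENNReal.mul_inv_cancel hε0 hεt, one_mul]

lemma WF_real_smul_nonneg {r : ℝ} (hr : 0 ≤ r) {a : A} (ha : 0 ≤ a) : 0 ≤ r • a := by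
  have hb : CFC.sqrt a * CFC.sqrt a = a := CFC.sqrt_mul_sqrt_self a ha
  have h : r • a = star (Real.sqrt r • CFC.sqrt a) * (Real.sqrt r • CFC.sqrt a) := by
    rw [star_smul, (IsSelfAdjoint.of_nonneg (CFC.sqrt_nonneg a)).star_eq, smul_mul_smul_comm, hb,
      star_trivial, Real.mul_self_sqrt hr]
  exact h ▸ star_mul_self_nonneg _

lemma WF_real_smul_le_smul {r : ℝ} (hr : 0 ≤ r) {a b : A} (hab : a ≤ b) : r • a ≤ r • b :=
  sub_nonneg.1 (by rw [← smul_sub]; exact WF_real_smul_nonneg hr (sub_nonneg.2 hab))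

lemma WF_pow_pos_map (φ : A →L[ℂ] A) (hφ : ∀ a : A, 0 ≤ a → 0 ≤ φ a) (n : ℕ) :
    ∀ a : A, 0 ≤ a → 0 ≤ (φ ^ n) a := by
  induction n with
  | zero => intro a ha; simpa using ha
  | succ n ih =>
    intro a ha
    rw [pow_succ, ContinuousLinearMap.mul_apply]
    exact ih _ (hφ a ha)

lemma WF_dir1 (φ : A →L[ℂ] A) (hφ : ∀ a : A, 0 ≤ a → 0 ≤ φ a) (w : Aˣ) (hw : 0 ≤ (w : A)) :
    spectralRadius ℂ φ ≤ spectralRadius ℂ ((↑w⁻¹ : A) * φ (w : A)) := by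
  have hw0 : (0:ℝ≥0) ∉ spectrum ℝ≥0 (w : A) := spectrum.zero_notMem ℝ≥0 w.isUnit
  set x : A := (w : A) ^ ((1:ℝ)/2) with hxdef
  set y : A := (w : A) ^ (-((1:ℝ)/2)) with hydef
  have hx : 0 ≤ x := CFC.rpow_nonneg
  have hy : 0 ≤ y := CFC.rpow_nonneg
  have hxy : x * y = 1 := CFC.rpow_mul_rpow_neg ((1:ℝ)/2) (w.isStrictlyPositive_iff.mpr hw)
  have hyx : y * x = 1 := CFC.rpow_neg_mul_rpow ((1:ℝ)/2) (w.isStrictlyPositive_iff.mpr hw)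
  have hxx : x * x = (w : A) := by
    rw [hxdef, ← CFC.rpow_add w.isUnit, show (1:ℝ)/2 + 1/2 = 1 by norm_num, CFC.rpow_one _ hw]
  have hyy : y * y = (↑w⁻¹ : A) := by
    rw [hydef, ← CFC.rpow_add w.isUnit, show -((1:ℝ)/2) + -((1:ℝ)/2) = -1 by norm_num,
      CFC.rpow_neg_one_eq_inv w hw]
  have hwinv : 0 ≤ (↑w⁻¹ : A) := by
    rw [← CFC.rpow_neg_one_eq_inv w hw]; exact CFC.rpow_nonneg
  set c : A := y * φ (w : A) * y with hcdef
  have hc0 : 0 ≤ c := conjugate_nonneg_of_nonneg (hφ _ hw) hy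
  -- φ w ≤ ‖c‖ • w
  have key : φ (w : A) ≤ ‖c‖ • (w : A) := by
    have h := star_left_conjugate_le_conjugate
      (IsSelfAdjoint.of_nonneg hc0).le_algebraMap_norm_self x
    rw [(IsSelfAdjoint.of_nonneg hx).star_eq] at h
    have hl : x * c * x = φ (w : A) := by
      rw [hcdef, show x * (y * φ (w : A) * y) * x = (x * y) * φ (w : A) * (y * x) by
        noncomm_ring, hxy, hyx, one_mul, mul_one]
    have hr : x * algebraMap ℝ A ‖c‖ * x = ‖c‖ • (w : A) := by
      rw [Algebra.algebraMap_eq_smul_one]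
      rw [mul_smul_comm, mul_one, smul_mul_assoc, hxx]
    rwa [hl, hr] at h
  -- 1 ≤ ‖w⁻¹‖ • w
  have one_le : (1 : A) ≤ ‖(↑w⁻¹ : A)‖ • (w : A) := by
    have h := star_left_conjugate_le_conjugate
      (IsSelfAdjoint.of_nonneg hwinv).le_algebraMap_norm_self x
    rw [(IsSelfAdjoint.of_nonneg hx).star_eq] at h
    have hl : x * (↑w⁻¹ : A) * x = 1 := by
      rw [← hyy, show x * (y * y) * x = (x * y) * (y * x) by noncomm_ring, hxy, hyx, one_mul]
    have hr : x * algebraMap ℝ A ‖(↑w⁻¹ : A)‖ * x = ‖(↑w⁻¹ : A)‖ • (w : A) := by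
      rw [Algebra.algebraMap_eq_smul_one, mul_smul_comm, mul_one, smul_mul_assoc, hxx]
    rwa [hl, hr] at h
  have w_le : (w : A) ≤ ‖(w : A)‖ • (1 : A) := by
    simpa [Algebra.algebraMap_eq_smul_one] using
      (IsSelfAdjoint.of_nonneg hw).le_algebraMap_norm_self
  -- iterate
  have hsmulmap : ∀ (r : ℝ) (a : A), φ (r • a) = r • φ a := fun r a =>
    ContinuousLinearMap.map_smul_of_tower φ r a
  have hiter : ∀ n : ℕ, (φ ^ n) (w : A) ≤ (‖c‖ ^ n) • (w : A) := by
    intro n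
    induction n with
    | zero => simp
    | succ n ih =>
      have h1 : (φ ^ (n+1)) (w : A) = φ ((φ ^ n) (w : A)) := by
        rw [pow_succ', ContinuousLinearMap.mul_apply]
      rw [h1]
      calc φ ((φ ^ n) (w : A)) ≤ φ ((‖c‖ ^ n) • (w : A)) :=
            WF_pos_mono φ hφ ih
        _ = (‖c‖ ^ n) • φ (w : A) := hsmulmap _ _
        _ ≤ (‖c‖ ^ n) • (‖c‖ • (w : A)) := WF_real_smul_le_smul (by positivity) key
        _ = (‖c‖ ^ (n+1)) • (w : A) := by rw [smul_smul, ← pow_succ]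
  have hone : ∀ n : ℕ, (φ ^ n) 1 ≤ (‖(↑w⁻¹ : A)‖ * ‖c‖ ^ n * ‖(w : A)‖) • (1 : A) := by
    intro n
    calc (φ ^ n) 1 ≤ (φ ^ n) (‖(↑w⁻¹ : A)‖ • (w : A)) :=
          WF_pos_mono (φ ^ n) (WF_pow_pos_map φ hφ n) one_le
      _ = ‖(↑w⁻¹ : A)‖ • (φ ^ n) (w : A) := ContinuousLinearMap.map_smul_of_tower _ _ _
      _ ≤ ‖(↑w⁻¹ : A)‖ • ((‖c‖ ^ n) • (w : A)) :=
          WF_real_smul_le_smul (norm_nonneg _) (hiter n)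
      _ ≤ ‖(↑w⁻¹ : A)‖ • ((‖c‖ ^ n) • (‖(w : A)‖ • (1 : A))) :=
          WF_real_smul_le_smul (norm_nonneg _) (WF_real_smul_le_smul (by positivity) w_le)
      _ = (‖(↑w⁻¹ : A)‖ * ‖c‖ ^ n * ‖(w : A)‖) • (1 : A) := by
          rw [smul_smul, smul_smul, mul_assoc]
  have hnorm1 : ∀ n : ℕ, ‖(φ ^ n) 1‖ ≤ ‖(↑w⁻¹ : A)‖ * ‖c‖ ^ n * ‖(w : A)‖ := by
    intro n
    rw [CStarAlgebra.norm_le_iff_le_algebraMap _ (by positivity)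
      (WF_pow_pos_map φ hφ n 1 zero_le_one), Algebra.algebraMap_eq_smul_one]
    exact hone n
  have hopnorm : ∀ n : ℕ, ‖φ ^ n‖ ≤ 6 * (‖(↑w⁻¹ : A)‖ * ‖c‖ ^ n * ‖(w : A)‖) := by
    intro n
    refine ContinuousLinearMap.opNorm_le_bound _ (by positivity) fun a => ?_
    calc ‖(φ ^ n) a‖ ≤ 6 * ‖(φ ^ n) 1‖ * ‖a‖ := WF_pos_apply_bound _ (WF_pow_pos_map φ hφ n) a
      _ ≤ 6 * (‖(↑w⁻¹ : A)‖ * ‖c‖ ^ n * ‖(w : A)‖) * ‖a‖ := by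
          have := hnorm1 n
          have h0 : (0:ℝ) ≤ ‖a‖ := norm_nonneg a
          nlinarith
  have hrad : spectralRadius ℂ φ ≤ (‖c‖₊ : ℝ≥0∞) := by
    refine WF_specrad_le_of_pow_bound φ (6 * ‖(↑w⁻¹ : A)‖₊ * ‖(w : A)‖₊) ‖c‖₊ fun n _ => ?_
    rw [← NNReal.coe_le_coe]
    push_cast
    calc (‖φ ^ n‖ : ℝ) ≤ 6 * (‖(↑w⁻¹ : A)‖ * ‖c‖ ^ n * ‖(w : A)‖) := hopnorm n
      _ = 6 * ‖(↑w⁻¹ : A)‖ * ‖(w : A)‖ * ‖c‖ ^ n := by ring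
  -- identify ‖c‖₊ with the spectral radius of w⁻¹ * φ w
  have hu : ∀ (u : Aˣ) (a : A), spectralRadius ℂ (↑u * a * ↑u⁻¹) = spectralRadius ℂ a := by
    intro u a
    unfold spectralRadius
    rw [spectrum.units_conjugate]
  set u : Aˣ := ⟨y, x, hyx, hxy⟩ with hudef
  have h1 : c = ↑u * (φ (w : A) * (↑w⁻¹ : A)) * ↑u⁻¹ := by
    show c = y * (φ (w : A) * (↑w⁻¹ : A)) * x
    rw [hcdef, ← hyy,
      show y * (φ (↑w : A) * (y * y)) * x = y * φ (↑w : A) * (y * (y * x)) from by noncomm_ring,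
      hyx, mul_one]
  have h2 : (↑w⁻¹ : A) * φ (w : A) = ↑w⁻¹ * (φ (w : A) * (↑w⁻¹ : A)) * ↑(w⁻¹)⁻¹ := by
    rw [inv_inv]
    calc (↑w⁻¹ : A) * φ (w : A) = ↑w⁻¹ * φ (w : A) * ((↑w⁻¹ : A) * w) := by
          rw [w.inv_mul, mul_one]
      _ = ↑w⁻¹ * (φ (w : A) * (↑w⁻¹ : A)) * w := by noncomm_ring
  have hceq : spectralRadius ℂ ((↑w⁻¹ : A) * φ (w : A)) = (‖c‖₊ : ℝ≥0∞) := by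
    rw [h2, hu w⁻¹ (φ (w : A) * (↑w⁻¹ : A)), ← hu u (φ (w : A) * (↑w⁻¹ : A)), ← h1]
    exact (IsSelfAdjoint.of_nonneg hc0).spectralRadius_eq_nnnorm
  rw [hceq]; exact hrad

open Filter in
lemma WF_dir2 [Nontrivial A] (φ : A →L[ℂ] A) (hφ : ∀ a : A, 0 ≤ a → 0 ≤ φ a) :
    (⨅ w : {w : Aˣ // 0 ≤ (w : A)},
        spectralRadius ℂ ((↑(w : Aˣ)⁻¹ : A) * φ ((w : Aˣ) : A))) ≤ spectralRadius ℂ φ := by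
  have hfin : spectralRadius ℂ φ ≠ ⊤ :=
    ((spectrum.spectralRadius_le_nnnorm (𝕜 := ℂ) φ).trans_lt ENNReal.coe_lt_top).ne
  refine ENNReal.le_of_forall_pos_le_add fun ε hε _ => ?_
  set r : ℝ≥0∞ := spectralRadius ℂ φ with hrdef
  set t : ℝ≥0 := r.toNNReal + ε with htdef
  set μ : ℝ≥0 := r.toNNReal + ε / 2 with hμdef
  have hμt : μ < t := add_lt_add_right (NNReal.half_lt_self hε.ne') _
  have ht0' : 0 < t := lt_of_lt_of_le hε le_add_self
  have ht0 : (0:ℝ) < (t:ℝ) := ht0'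
  have hrμ : r < (μ : ℝ≥0∞) := by
    conv_lhs => rw [← ENNReal.coe_toNNReal hfin]
    exact ENNReal.coe_lt_coe.2 (lt_add_of_pos_right _ (by positivity))
  -- eventually ‖φ^n‖ ≤ μ^n
  have hg := spectrum.pow_nnnorm_pow_one_div_tendsto_nhds_spectralRadius φ
  have hev : ∀ᶠ n : ℕ in atTop, (‖φ ^ n‖₊ : ℝ≥0∞) ^ (1/(n:ℝ)) < (μ : ℝ≥0∞) :=
    hg.eventually_lt_const hrμ
  have hev2 : ∀ᶠ n : ℕ in atTop, ‖φ ^ n‖ ≤ (μ:ℝ) ^ n := by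
    filter_upwards [hev, eventually_ge_atTop 1] with n h1 h2
    have hn0 : ((n:ℕ):ℝ) ≠ 0 := by exact_mod_cast Nat.one_le_iff_ne_zero.mp h2
    have : (‖φ ^ n‖₊ : ℝ≥0∞) ≤ ((μ ^ n : ℝ≥0) : ℝ≥0∞) := by
      calc (‖φ ^ n‖₊ : ℝ≥0∞) = ((‖φ ^ n‖₊ : ℝ≥0∞) ^ (1/(n:ℝ))) ^ (n:ℝ) := by
            rw [← ENNReal.rpow_mul, one_div, inv_mul_cancel₀ hn0, ENNReal.rpow_one]
        _ ≤ ((μ:ℝ≥0∞)) ^ (n:ℝ) := ENNReal.rpow_le_rpow h1.le (by positivity)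
        _ = ((μ ^ n : ℝ≥0) : ℝ≥0∞) := by rw [ENNReal.rpow_natCast]; push_cast; rfl
    have := ENNReal.coe_le_coe.1 this
    exact_mod_cast this
  -- the series
  set g : ℕ → A := fun n => (((t:ℝ)⁻¹) ^ n) • ((φ ^ n) 1) with hgdef
  have hgnonneg : ∀ n, 0 ≤ g n := fun n =>
    WF_real_smul_nonneg (by positivity) (WF_pow_pos_map φ hφ n 1 zero_le_one)
  have hsum : Summable g := by
    apply Summable.of_norm_bounded_eventually_nat (g := fun n => ‖(1:A)‖ * ((μ:ℝ)/(t:ℝ)) ^ n)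
    · have hlt : (μ:ℝ)/(t:ℝ) < 1 := by rw [div_lt_one ht0]; exact_mod_cast hμt
      exact (summable_geometric_of_lt_one (by positivity) hlt).mul_left _
    · filter_upwards [hev2] with n hn
      simp only [hgdef]
      simp only [norm_smul, norm_pow, norm_inv, Real.norm_eq_abs, abs_of_pos ht0]
      calc ((t:ℝ)⁻¹) ^ n * ‖(φ ^ n) 1‖ ≤ ((t:ℝ)⁻¹) ^ n * (‖φ ^ n‖ * ‖(1:A)‖) := by
            exact mul_le_mul_of_nonneg_left (ContinuousLinearMap.le_opNorm _ _) (by positivity)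
        _ ≤ ((t:ℝ)⁻¹) ^ n * ((μ:ℝ) ^ n * ‖(1:A)‖) := by
            exact mul_le_mul_of_nonneg_left
              (mul_le_mul_of_nonneg_right hn (norm_nonneg _)) (by positivity)
        _ = ‖(1:A)‖ * ((μ:ℝ)/(t:ℝ)) ^ n := by
            rw [div_pow, inv_pow]
            field_simp
  set w : A := ∑' n, g n with hwdef
  have hw0 : 0 ≤ w := tsum_nonneg hgnonneg
  have hg0 : g 0 = 1 := by simp [hgdef]
  have hshift : Summable fun n => g (n + 1) := (summable_nat_add_iff 1).2 hsum
  have hφg : ∀ n, φ (g n) = (t:ℝ) • g (n + 1) := by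
    intro n
    simp only [hgdef]
    rw [ContinuousLinearMap.map_smul_of_tower, smul_smul]
    have h1 : (φ ^ (n+1)) (1:A) = φ ((φ ^ n) 1) := by
      rw [pow_succ', ContinuousLinearMap.mul_apply]
    rw [h1]
    congr 1
    field_simp
    rw [pow_succ, mul_left_comm, one_div, mul_inv_cancel₀ ht0.ne', mul_one]
  have hφw : φ w = (t:ℝ) • w - (t:ℝ) • 1 := by
    have hmap : φ w = ∑' n, φ (g n) := φ.map_tsum hsum
    have hsum2 : ∑' n, g (n + 1) = w - 1 := by
      have := Summable.tsum_eq_zero_add hsum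
      rw [hg0] at this
      rw [hwdef, this]
      abel
    calc φ w = ∑' n, φ (g n) := hmap
      _ = ∑' n, (t:ℝ) • g (n + 1) := tsum_congr hφg
      _ = (t:ℝ) • ∑' n, g (n + 1) := by rw [Summable.tsum_const_smul _ hshift]
      _ = (t:ℝ) • (w - 1) := by rw [hsum2]
      _ = (t:ℝ) • w - (t:ℝ) • 1 := smul_sub _ _ _
  have hw1 : (1:A) ≤ w := by
    have h1 : (0:A) ≤ (t:ℝ)⁻¹ • φ w := WF_real_smul_nonneg (by positivity) (hφ w hw0)
    have h2 : (t:ℝ)⁻¹ • φ w = w - 1 := by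
      rw [hφw, smul_sub, smul_smul, smul_smul, inv_mul_cancel₀ ht0.ne', one_smul, one_smul]
    rw [h2, sub_nonneg] at h1
    exact h1
  have hwu : IsUnit w := CStarAlgebra.isUnit_of_le 1 hw1
  set W : Aˣ := hwu.unit with hWdef
  have hWw : (W : A) = w := hwu.unit_spec
  have hW0 : 0 ≤ (W : A) := hWw ▸ hw0
  have hWinv0 : 0 ≤ (↑W⁻¹ : A) := by
    rw [← CFC.rpow_neg_one_eq_inv W hW0]; exact CFC.rpow_nonneg
  have hWinv1 : (↑W⁻¹ : A) ≤ 1 := by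
    refine CStarAlgebra.inv_le_one ?_
    rw [← Units.val_le_val, Units.val_one, hWw]
    exact hw1
  refine iInf_le_of_le ⟨W, hW0⟩ ?_
  show spectralRadius ℂ ((↑W⁻¹ : A) * φ ((W : Aˣ) : A)) ≤ r + ε
  have heq : (↑W⁻¹ : A) * φ ((W : Aˣ) : A) = (t:ℝ) • ((1:A) - (↑W⁻¹ : A)) := by
    rw [hWw, hφw, mul_sub, mul_smul_comm, mul_smul_comm, ← hWw, Units.inv_mul, mul_one,
      ← smul_sub]
  rw [heq]
  have h1 : ‖(t:ℝ)‖₊ = t := by ext; simp [Real.norm_of_nonneg t.coe_nonneg]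
  have h2 : ‖(1:A) - (↑W⁻¹ : A)‖₊ ≤ 1 :=
    (CStarAlgebra.nnnorm_le_one_iff_of_nonneg _ (sub_nonneg.2 hWinv1)).2
      (sub_le_self _ hWinv0)
  calc spectralRadius ℂ ((t:ℝ) • ((1:A) - (↑W⁻¹ : A)))
      ≤ (‖(t:ℝ) • ((1:A) - (↑W⁻¹ : A))‖₊ : ℝ≥0∞) :=
        spectrum.spectralRadius_le_nnnorm (𝕜 := ℂ) _
    _ ≤ (t : ℝ≥0∞) := by
        rw [nnnorm_smul, h1]
        have h3 : t * ‖(1:A) - (↑W⁻¹ : A)‖₊ ≤ t := by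
          calc t * ‖(1:A) - (↑W⁻¹ : A)‖₊ ≤ t * 1 := mul_le_mul_right h2 t
            _ = t := mul_one t
        exact_mod_cast h3
    _ = r + ε := by rw [htdef, ENNReal.coe_add, ENNReal.coe_toNNReal hfin]

lemma WF_specrad_subsingleton {B : Type*} [NormedRing B] [NormedAlgebra ℂ B] [Subsingleton B]
    (b : B) : spectralRadius ℂ b = 0 := by
  have h : spectrum ℂ b = ∅ := by
    ext k
    simp [spectrum.mem_iff, isUnit_of_subsingleton]
  simp [spectralRadius, h]

end helpers

/-- Wielandt–Friedland formula: for a positive map `φ` on a unital C*-algebra,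
`r(φ) = inf { r(w⁻¹ φ(w)) : w strictly positive }`. -/
theorem stmt3 {A : Type*} [CStarAlgebra A] [PartialOrder A] [StarOrderedRing A]
    (φ : A →L[ℂ] A) (hφ : ∀ a : A, 0 ≤ a → 0 ≤ φ a) :
    spectralRadius ℂ φ =
      ⨅ w : {w : Aˣ // 0 ≤ (w : A)},
        spectralRadius ℂ ((↑(w : Aˣ)⁻¹ : A) * φ ((w : Aˣ) : A)) := by
  rcases subsingleton_or_nontrivial A with hA | hA
  · have hCLM : Subsingleton (A →L[ℂ] A) :=
      ⟨fun f g => ContinuousLinearMap.ext fun x => Subsingleton.elim _ _⟩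
    rw [WF_specrad_subsingleton φ]
    refine le_antisymm zero_le ?_
    exact iInf_le_of_le ⟨1, zero_le_one⟩ (le_of_eq (WF_specrad_subsingleton _))
  · exact le_antisymm (le_iInf fun w => WF_dir1 φ hφ w.1 w.2) (WF_dir2 φ hφ)
end

section
/- Let W₁, W₂ be two linearly independent positive semidefinite operators on a finite dimensional Hilbert space H. Then there exists a nonzero W₃ in the span of {W₁, W₂} which is positive semidefinite and singular (not injective). -/
open ContinuousLinearMap in
lemma aux12 {H : Type*} [NormedAddCommGroup H] [InnerProductSpace ℂ H] [CompleteSpace H]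
    {T : H →L[ℂ] H} (hT : T.IsPositive) {v : H} (hv : T.reApplyInnerSelf v = 0) :
    T v = 0 := by
  have hsym := (isSelfAdjoint_iff_isSymmetric.mp hT.isSelfAdjoint)
  have key : ∀ t : ℝ, 0 ≤ 2 * t * ‖T v‖^2 + t^2 * (inner ℂ (T (T v)) (T v) : ℂ).re := by
    intro t
    have h0 := hT.2 (v + (t:ℂ) • T v)
    rw [reApplyInnerSelf] at h0 hv
    simp only [map_add, map_smul, inner_add_left, inner_add_right, inner_smul_left,
      inner_smul_right, map_add, map_mul] at h0
    have h1 : (inner ℂ (T (T v)) v : ℂ) = inner ℂ (T v) (T v) := hsym (T v) v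
    have h2 : (inner ℂ (T v) (T v) : ℂ).re = ‖T v‖^2 := by
      have := inner_self_eq_norm_sq (𝕜 := ℂ) (T v); simpa using this
    rw [h1] at h0
    simp only [RCLike.re_to_complex] at h0 hv
    simp [RCLike.conj_ofReal, h2, hv] at h0
    have e : ((‖T v‖ : ℂ) ^ 2).re = ‖T v‖^2 := by rw [← Complex.ofReal_pow, Complex.ofReal_re]
    rw [e] at h0
    nlinarith [h0]
  set a := ‖T v‖^2 with ha
  have hC : 0 ≤ (inner ℂ (T (T v)) (T v) : ℂ).re := by
    have := hT.re_inner_nonneg_left (T v); simpa using this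
  set C := (inner ℂ (T (T v)) (T v) : ℂ).re
  have haz : a = 0 := by
    by_contra hne
    have hapos : 0 < a := lt_of_le_of_ne (by positivity) (Ne.symm hne)
    have hk := key (-a / (C + 1))
    have hC1 : 0 < C + 1 := by linarith
    have h3 : 0 ≤ (2 * (-a/(C+1)) * a + (-a/(C+1))^2 * C) * (C+1)^2 :=
      mul_nonneg hk (by positivity)
    have h4 : (2 * (-a/(C+1)) * a + (-a/(C+1))^2 * C) * (C+1)^2
        = -2*a^2*(C+1) + a^2*C := by
      field_simp
    rw [h4] at h3
    nlinarith [mul_pos hapos hapos, mul_nonneg hC (le_of_lt (mul_pos hapos hapos))]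
  have : ‖T v‖ = 0 := by nlinarith [norm_nonneg (T v)]
  simpa using this

open ContinuousLinearMap

section Helpers
variable {H : Type*} [NormedAddCommGroup H] [InnerProductSpace ℂ H]

lemma reApply_smul12 (T : H →L[ℂ] H) (c : ℝ) (x : H) :
    T.reApplyInnerSelf ((c:ℂ) • x) = c^2 * T.reApplyInnerSelf x := by
  rw [reApplyInnerSelf, reApplyInnerSelf, map_smul,
    inner_smul_left (𝕜 := ℂ), inner_smul_right (𝕜 := ℂ), Complex.conj_ofReal,
    ← mul_assoc, ← Complex.ofReal_mul]
  simp only [RCLike.re_to_complex, Complex.re_ofReal_mul]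
  ring

lemma reApply_comb12 (lam : ℝ) (T S : H →L[ℂ] H) (x : H) :
    ((lam:ℂ) • T - S).reApplyInnerSelf x
      = lam * T.reApplyInnerSelf x - S.reApplyInnerSelf x := by
  rw [reApplyInnerSelf, sub_apply, smul_apply, inner_sub_left,
    inner_smul_left (𝕜 := ℂ), Complex.conj_ofReal]
  simp only [RCLike.re_to_complex, Complex.sub_re, Complex.re_ofReal_mul]
  rfl

set_option synthInstance.maxHeartbeats 1000000 in
set_option maxHeartbeats 1000000 in
lemma sa12 [CompleteSpace H] (lam : ℝ) (T S : H →L[ℂ] H) (hT : IsSelfAdjoint T) (hS : IsSelfAdjoint S) :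
    IsSelfAdjoint ((lam:ℂ) • T - S) :=
  (IsSelfAdjoint.smul (by exact Complex.conj_ofReal lam) hT).sub hS

lemma main12 [FiniteDimensional ℂ H] (W₁ W₂ : H →L[ℂ] H)
    (h1 : W₁.IsPositive) (h2 : W₂.IsPositive)
    (hli : LinearIndependent ℂ ![W₁, W₂]) (hinj : Function.Injective W₁) :
    ∃ W₃ : H →L[ℂ] H, W₃ ≠ 0 ∧ W₃ ∈ Submodule.span ℂ {W₁, W₂} ∧
      W₃.IsPositive ∧ ¬Function.Injective W₃ := by
  have hW1 : W₁ ≠ 0 := by have := hli.ne_zero 0; simpa using this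
  have : Nontrivial H := by
    rcases subsingleton_or_nontrivial H with hs | hn
    · exact absurd (by ext x; simp [Subsingleton.elim x 0]) hW1
    · exact hn
  have hpos : ∀ v : H, v ≠ 0 → 0 < W₁.reApplyInnerSelf v := by
    intro v hv
    rcases lt_or_eq_of_le (h1.2 v) with h | h
    · exact h
    · exact absurd (hinj (by simpa using aux12 h1 h.symm)) hv
  set S := Metric.sphere (0:H) 1 with hS
  have hne0 : ∀ v ∈ S, v ≠ 0 := by
    intro v hv h
    rw [hS, h] at hv
    simpa using hv
  have hSne : S.Nonempty := NormedSpace.sphere_nonempty.mpr zero_le_one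
  have hSc : IsCompact S := isCompact_sphere 0 1
  set f : H → ℝ := fun v => W₂.reApplyInnerSelf v / W₁.reApplyInnerSelf v with hf
  have hfc : ContinuousOn f S :=
    ContinuousOn.div
      W₂.reApplyInnerSelf_continuous.continuousOn
      W₁.reApplyInnerSelf_continuous.continuousOn
      (fun v hv => ne_of_gt (hpos v (hne0 v hv)))
  obtain ⟨v₀, hv₀S, hmax⟩ := hSc.exists_isMaxOn hSne hfc
  have hv₀ne : v₀ ≠ 0 := hne0 v₀ hv₀S
  set lam := f v₀ with hlam
  set W₃ := (lam:ℂ) • W₁ - W₂ with hW₃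
  have hWpos : W₃.IsPositive := by
    refine ⟨(sa12 lam W₁ W₂ h1.isSelfAdjoint h2.isSelfAdjoint).isSymmetric, ?_⟩
    intro x
    rcases eq_or_ne x 0 with rfl | hx
    · simp [reApplyInnerSelf]
    · set u := ((‖x‖⁻¹ : ℝ) : ℂ) • x with hudef
      have huS : u ∈ S := by
        simp only [hudef, hS, mem_sphere_iff_norm, sub_zero, norm_smul]
        simp [norm_inv, inv_mul_cancel₀ (norm_ne_zero_iff.mpr hx)]
      have hxu : ((‖x‖ : ℝ) : ℂ) • u = x := by
        rw [hudef, smul_smul, ← Complex.ofReal_mul,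
          mul_inv_cancel₀ (norm_ne_zero_iff.mpr hx)]
        simp
      have h1u := hpos u (hne0 u huS)
      have key : 0 ≤ lam * W₁.reApplyInnerSelf u - W₂.reApplyInnerSelf u := by
        have h := (div_le_iff₀ h1u).mp (hmax huS)
        simp only [hf] at h ⊢
        linarith
      have heq : W₃.reApplyInnerSelf x
          = ‖x‖^2 * (lam * W₁.reApplyInnerSelf u - W₂.reApplyInnerSelf u) := by
        conv_lhs => rw [← hxu]
        rw [hW₃, reApply_smul12, reApply_comb12]
      rw [heq]
      positivity
  have hker : W₃ v₀ = 0 := by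
    apply aux12 hWpos
    have h1v := (hpos v₀ hv₀ne).ne'
    rw [hW₃, reApply_comb12, hlam, hf]
    field_simp
    ring
  exact ⟨W₃, by
      intro h0
      have h := (Fintype.linearIndependent_iff.mp hli) ![(lam:ℂ), -1] ?_ 1
      · simpa using h
      · rw [Fin.sum_univ_two]
        simpa [hW₃, sub_eq_add_neg, neg_smul] using h0,
    Submodule.sub_mem _ (Submodule.smul_mem _ _ (Submodule.subset_span (by simp)))
      (Submodule.subset_span (by simp)),
    hWpos,
    fun hinj3 => hv₀ne (hinj3 (by simpa using hker))⟩

end Helpers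

/-- Given two linearly independent positive operators `W₁, W₂` on a finite dimensional Hilbert
space, some nonzero element of their span is positive and singular. -/
theorem stmt12 {H : Type*} [NormedAddCommGroup H] [InnerProductSpace ℂ H]
    [FiniteDimensional ℂ H] (W₁ W₂ : H →L[ℂ] H)
    (h1 : W₁.IsPositive) (h2 : W₂.IsPositive)
    (hli : LinearIndependent ℂ ![W₁, W₂]) :
    ∃ W₃ : H →L[ℂ] H, W₃ ≠ 0 ∧ W₃ ∈ Submodule.span ℂ {W₁, W₂} ∧
      W₃.IsPositive ∧ ¬Function.Injective W₃ := by
  by_cases hinj : Function.Injective W₁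
  · exact main12 W₁ W₂ h1 h2 hli hinj
  · have hW1 : W₁ ≠ 0 := by have := hli.ne_zero 0; simpa using this
    exact ⟨W₁, hW1, Submodule.subset_span (by simp), h1, hinj⟩
end

section
/- Define the CP map τ on M₂(ℂ) by τ([[a,b],[c,d]]) = [[a+d, 0],[0,0]]. Then r(τ) = 1 and ‖τⁿ‖ = 2 for all n ≥ 1, yet there exists no strictly positive (positive definite) V ∈ M₂(ℂ) with τ(V) ≤ V. -/
set_option synthInstance.maxHeartbeats 1000000
set_option maxHeartbeats 1000000

open scoped ComplexOrder

/-- For the CP map `τ([[a,b],[c,d]]) = [[a+d,0],[0,0]]` on `M₂(ℂ)`: `r(τ) = 1`,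
`‖τⁿ‖ = ‖τⁿ(I)‖ = 2` for all `n ≥ 1`, yet there is no positive definite `V` with `τ(V) ≤ V`. -/
theorem stmt13 (τ : Module.End ℂ (Matrix (Fin 2) (Fin 2) ℂ))
    (hτ : ∀ X : Matrix (Fin 2) (Fin 2) ℂ,
      τ X = (X 0 0 + X 1 1) • Matrix.single 0 0 (1 : ℂ)) :
    ((1 : ℂ) ∈ spectrum ℂ τ ∧ ∀ z ∈ spectrum ℂ τ, ‖z‖ ≤ 1) ∧
    (∀ n : ℕ, 1 ≤ n → ‖Matrix.toEuclideanCLM (𝕜 := ℂ) ((τ ^ n) 1)‖ = 2) ∧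
    ¬∃ V : Matrix (Fin 2) (Fin 2) ℂ, V.PosDef ∧ (V - τ V).PosSemidef := by
  set E : Matrix (Fin 2) (Fin 2) ℂ := Matrix.single 0 0 (1 : ℂ) with hE
  have hE00 : E 0 0 = 1 := by simp [hE]
  have hE11 : E 1 1 = 0 := by simp [hE, Matrix.single]
  have hEne : E ≠ 0 := by
    intro h
    have := congrFun (congrFun h 0) 0
    rw [hE00] at this
    simp at this
  have hτE : τ E = E := by rw [hτ, hE00, hE11]; simp
  refine ⟨⟨?_, ?_⟩, ?_, ?_⟩
  · rw [← Module.End.hasEigenvalue_iff_mem_spectrum]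
    exact Module.End.hasEigenvalue_of_hasEigenvector
      ⟨by simpa [Module.End.mem_eigenspace_iff] using hτE, hEne⟩
  · intro z hz
    rw [← Module.End.hasEigenvalue_iff_mem_spectrum] at hz
    obtain ⟨v, hv, hvne⟩ := hz.exists_hasEigenvector
    have h1 : τ v = z • v := by rwa [Module.End.mem_eigenspace_iff] at hv
    have h2 : τ (τ v) = τ v := by
      rw [hτ v, map_smul, hτE]
    rw [h1, map_smul, h1, smul_smul] at h2
    have h3 : (z * z - z) • v = 0 := by rw [sub_smul, h2, sub_self]
    have h4 : z * z - z = 0 := by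
      rcases smul_eq_zero.mp h3 with h | h
      · exact h
      · exact absurd h hvne
    have h5 : z = 0 ∨ z = 1 := by
      rcases mul_eq_zero.mp (by linear_combination h4 : z * (z - 1) = 0) with h | h
      · exact Or.inl h
      · exact Or.inr (by linear_combination h)
    rcases h5 with h | h <;> simp [h]
  · intro n hn
    have key : ∀ m : ℕ, (τ ^ (m + 1)) 1 = (2 : ℂ) • E := by
      intro m
      induction m with
      | zero =>
        rw [zero_add, pow_one, hτ, Matrix.one_apply_eq, Matrix.one_apply_eq]
        norm_num
      | succ k ih =>
        rw [pow_succ', Module.End.mul_apply, ih, map_smul, hτE]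
    obtain ⟨m, rfl⟩ := Nat.exists_eq_add_of_le hn
    rw [Nat.add_comm, key]
    have hmul : E * E = E := by
      rw [hE, Matrix.single_mul_single_same]; norm_num
    have hstar : star E = E := by
      ext i j
      fin_cases i <;> fin_cases j <;>
        simp [hE, Matrix.single, Matrix.conjTranspose_apply]
    set P := Matrix.toEuclideanCLM (𝕜 := ℂ) E with hP
    have hPmul : P * P = P := by rw [hP, ← map_mul, hmul]
    have hPstar : star P = P := by rw [hP, ← map_star, hstar]
    have hPne : P ≠ 0 := by
      intro h
      apply hEne
      have h0 : Matrix.toEuclideanCLM (𝕜 := ℂ) E = 0 := hP ▸ h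
      have h1 : E = (Matrix.toEuclideanCLM (𝕜 := ℂ)).symm 0 := by
        rw [← h0, StarAlgEquiv.symm_apply_apply]
      rw [map_zero] at h1
      exact h1
    have hPnorm : ‖P‖ = 1 := by
      have := CStarRing.norm_star_mul_self (x := P)
      rw [hPstar, hPmul] at this
      have hpos : ‖P‖ ≠ 0 := norm_ne_zero_iff.mpr hPne
      have h2 : ‖P‖ * 1 = ‖P‖ * ‖P‖ := by rw [mul_one]; exact this
      exact (mul_left_cancel₀ hpos h2).symm
    rw [map_smul, ← hP]
    show ‖(2 : ℂ) • P‖ = 2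
    rw [norm_smul (2 : ℂ) P, hPnorm]
    norm_num
  · rintro ⟨V, hV, hpsd⟩
    have h11 : (0 : ℂ) < V 1 1 := by
      have := hV.diag_pos (i := 1)
      simpa [dotProduct, Matrix.mulVec, Fin.sum_univ_two, Pi.single_apply] using this
    have hneg : (0 : ℂ) ≤ (V - τ V) 0 0 := by
      have := hpsd.diag_nonneg (i := 0)
      simpa [dotProduct, Matrix.mulVec, Fin.sum_univ_two, Pi.single_apply] using this
    have hentry : (V - τ V) 0 0 = -(V 1 1) := by
      rw [Matrix.sub_apply, hτ, Matrix.smul_apply, hE00, smul_eq_mul]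
      ring
    rw [hentry] at hneg
    have : V 1 1 ≤ 0 := neg_nonneg.mp hneg
    exact absurd (lt_of_lt_of_le h11 this) (lt_irrefl 0)
end

section
/- Let ψ_{ij} : M_{n_j}(ℂ) → M_{n_i}(ℂ), 1 ≤ i,j ≤ d, be positive maps such that id + ψ_{ii} is strictly positive for each i and ψ_{ij} is strictly positive for all i ≠ j. Let X = (X_{ij}) ∈ M_m(ℂ), m = n₁+⋯+n_d, be a nonzero positive semidefinite block matrix. Define Y by Y_{ii} = X_{ii} + Σ_k ψ_{ik}(X_{kk}) and Y_{ij} = X_{ij} for i ≠ j. Then Y is positive definite. -/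
open scoped ComplexOrder
open Matrix


private lemma quad_sum17 {m ι : Type*} [Fintype m] [DecidableEq ι] (s : Finset ι)
    (M : ι → Matrix m m ℂ) (v : m → ℂ) :
    star v ⬝ᵥ (∑ k ∈ s, M k) *ᵥ v = ∑ k ∈ s, star v ⬝ᵥ (M k) *ᵥ v := by
  induction s using Finset.induction with
  | empty => simp
  | insert _ _ h ih => simp [Finset.sum_insert h, Matrix.add_mulVec, dotProduct_add, ih]


private lemma quad_blockdiag17 {d : ℕ} (n : Fin d → ℕ)
    (D : ∀ i, Matrix (Fin (n i)) (Fin (n i)) ℂ) (x : (Σ i, Fin (n i)) → ℂ) :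
    ∑ p : Σ i, Fin (n i), ∑ q : Σ i, Fin (n i),
      star (x p) * ((if h : p.1 = q.1 then
        D p.1 p.2 (Fin.cast (congrArg n h.symm) q.2) else 0) * x q)
      = ∑ i, star (fun a => x ⟨i, a⟩) ⬝ᵥ (D i *ᵥ fun a => x ⟨i, a⟩) := by
  rw [← Finset.univ_sigma_univ, Finset.sum_sigma]
  refine Finset.sum_congr rfl fun i _ => ?_
  simp only [dotProduct, Matrix.mulVec, Pi.star_apply, Finset.mul_sum]
  refine Finset.sum_congr rfl fun a _ => ?_
  rw [Finset.sum_sigma]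
  refine (Finset.sum_eq_single i (fun j _ hj => ?_) (by simp)).trans ?_
  · refine Finset.sum_eq_zero fun b _ => ?_
    rw [dif_neg (fun h : i = j => hj h.symm)]
    ring
  · refine Finset.sum_congr rfl fun b _ => ?_
    rw [dif_pos rfl]
    rfl

/-- Perturbing the diagonal blocks of a nonzero positive semidefinite block matrix `X` by
strictly positive maps of its diagonal blocks yields a positive definite matrix. -/
theorem stmt17 {d : ℕ} (n : Fin d → ℕ)
    (ψ : ∀ i j : Fin d,
      Matrix (Fin (n j)) (Fin (n j)) ℂ →ₗ[ℂ] Matrix (Fin (n i)) (Fin (n i)) ℂ)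
    (hpos : ∀ i j, ∀ B : Matrix (Fin (n j)) (Fin (n j)) ℂ,
      B.PosSemidef → (ψ i j B).PosSemidef)
    (hdiag : ∀ i, ∀ B : Matrix (Fin (n i)) (Fin (n i)) ℂ,
      B.PosSemidef → B ≠ 0 → (B + ψ i i B).PosDef)
    (hoff : ∀ i j, i ≠ j → ∀ B : Matrix (Fin (n j)) (Fin (n j)) ℂ,
      B.PosSemidef → B ≠ 0 → (ψ i j B).PosDef)
    (X : Matrix (Σ i, Fin (n i)) (Σ i, Fin (n i)) ℂ)
    (hX : X.PosSemidef) (hX0 : X ≠ 0) :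
    (Matrix.of (fun p q : Σ i, Fin (n i) =>
      X p q + if h : p.1 = q.1 then
        (∑ k, ψ p.1 k (Matrix.of fun a b => X ⟨k, a⟩ ⟨k, b⟩)) p.2
          (Fin.cast (congrArg n h.symm) q.2)
      else 0)).PosDef := by
  classical
  set Xb : ∀ k : Fin d, Matrix (Fin (n k)) (Fin (n k)) ℂ :=
    fun k => Matrix.of fun a b => X ⟨k, a⟩ ⟨k, b⟩ with hXbdef
  have hXb : ∀ k, (Xb k).PosSemidef := fun k => hX.submatrix (Sigma.mk k)
  set D : ∀ i : Fin d, Matrix (Fin (n i)) (Fin (n i)) ℂ :=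
    fun i => ∑ k, ψ i k (Xb k) with hDdef
  have hψpsd : ∀ i k, (ψ i k (Xb k)).PosSemidef := fun i k => hpos i k _ (hXb k)
  have hD : ∀ i, (D i).PosSemidef := fun i =>
    Finset.sum_induction _ _ (fun _ _ ha hb => ha.add hb) .zero (fun k _ => hψpsd i k)
  -- some diagonal block is nonzero
  have hk : ∃ k, Xb k ≠ 0 := by
    by_contra h
    push_neg at h
    apply hX0
    have hdz : ∀ p : Σ i, Fin (n i), X p p = 0 := by
      rintro ⟨k, a⟩
      have := congrFun (congrFun (h k) a) a
      simpa [hXbdef] using this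
    ext p q
    have h1 : star (Pi.single q 1 : (Σ i, Fin (n i)) → ℂ) ⬝ᵥ X *ᵥ Pi.single q 1 = 0 := by
      rw [Matrix.mulVec_single]
      simp [dotProduct, Pi.single_apply, apply_ite, hdz q]
    have h2 := (hX.dotProduct_mulVec_zero_iff _).mp h1
    have h3 := congrFun h2 p
    simpa [Matrix.mulVec_single] using h3
  obtain ⟨k, hknz⟩ := hk
  -- quadratic form identity
  have hQ : ∀ x : (Σ i, Fin (n i)) → ℂ,
      star x ⬝ᵥ ((Matrix.of (fun p q : Σ i, Fin (n i) =>
        X p q + if h : p.1 = q.1 then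
          (∑ k, ψ p.1 k (Matrix.of fun a b => X ⟨k, a⟩ ⟨k, b⟩)) p.2
            (Fin.cast (congrArg n h.symm) q.2)
        else 0)) *ᵥ x)
      = star x ⬝ᵥ (X *ᵥ x)
        + ∑ i, star (fun a => x ⟨i, a⟩) ⬝ᵥ (D i *ᵥ fun a => x ⟨i, a⟩) := by
    intro x
    rw [← quad_blockdiag17 n D x]
    simp only [dotProduct, Matrix.mulVec, Matrix.of_apply, Pi.star_apply,
      add_mul, mul_add, Finset.sum_add_distrib, Finset.mul_sum]
    rfl
  rw [Matrix.posDef_iff_dotProduct_mulVec]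
  constructor
  · -- Hermitian
    rw [Matrix.IsHermitian]
    ext ⟨i, a⟩ ⟨j, b⟩
    simp only [Matrix.conjTranspose_apply, Matrix.of_apply]
    by_cases h : i = j
    · subst h
      rw [dif_pos rfl, dif_pos rfl]
      have e1 : star (X ⟨i, b⟩ ⟨i, a⟩) = X ⟨i, a⟩ ⟨i, b⟩ :=
        congrFun (congrFun hX.1 ⟨i, a⟩) ⟨i, b⟩
      have e2 : star ((D i) b a) = (D i) a b :=
        congrFun (congrFun (hD i).1 a) b
      rw [star_add]
      exact congrArg₂ (· + ·) e1 e2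
    · rw [dif_neg (fun hh => h hh.symm), dif_neg h]
      have e1 : star (X ⟨j, b⟩ ⟨i, a⟩) = X ⟨i, a⟩ ⟨j, b⟩ :=
        congrFun (congrFun hX.1 ⟨i, a⟩) ⟨j, b⟩
      simpa using e1
  · -- positivity
    intro x hx
    rw [hQ x]
    -- nonnegativity facts
    have hnn : ∀ i, (0:ℂ) ≤ star (fun a => x ⟨i, a⟩) ⬝ᵥ (D i *ᵥ fun a => x ⟨i, a⟩) :=
      fun i => (hD i).dotProduct_mulVec_nonneg _
    by_cases hxo : ∃ j, j ≠ k ∧ (fun a => x ⟨j, a⟩) ≠ 0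
    · obtain ⟨j, hjk, hxj⟩ := hxo
      refine add_pos_of_nonneg_of_pos (hX.dotProduct_mulVec_nonneg x) ?_
      refine Finset.sum_pos' (fun i _ => hnn i) ⟨j, Finset.mem_univ j, ?_⟩
      rw [quad_sum17]
      refine Finset.sum_pos' (fun k' _ => (hψpsd j k').dotProduct_mulVec_nonneg _) ⟨k, Finset.mem_univ k, ?_⟩
      exact (hoff j k hjk (Xb k) (hXb k) hknz).dotProduct_mulVec_pos hxj
    · push_neg at hxo
      have hsupp : ∀ j, j ≠ k → ∀ a, x ⟨j, a⟩ = 0 := by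
        intro j hj a
        exact congrFun (hxo j hj) a
      have hxk : (fun a => x ⟨k, a⟩) ≠ 0 := by
        intro h0
        apply hx
        funext ⟨j, a⟩
        by_cases hj : j = k
        · subst hj; exact congrFun h0 a
        · exact hsupp j hj a
      -- X-part reduces to the k-block
      have hXpart : star x ⬝ᵥ (X *ᵥ x)
          = star (fun a => x ⟨k, a⟩) ⬝ᵥ (Xb k *ᵥ fun a => x ⟨k, a⟩) := by
        simp only [dotProduct, Matrix.mulVec, Pi.star_apply, Finset.mul_sum]
        rw [← Finset.univ_sigma_univ, Finset.sum_sigma]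
        rw [Finset.sum_eq_single k (fun j _ hj => Finset.sum_eq_zero fun a _ => by
          rw [Finset.sum_eq_zero fun q _ => by simp [hsupp j hj a]]) (by simp)]
        refine Finset.sum_congr rfl fun a _ => ?_
        rw [Finset.sum_sigma]
        rw [Finset.sum_eq_single k (fun j _ hj => Finset.sum_eq_zero fun b _ => by
          simp [hsupp j hj b]) (by simp)]
        rfl
      rw [hXpart]
      have hsplit : ∑ i, star (fun a => x ⟨i, a⟩) ⬝ᵥ (D i *ᵥ fun a => x ⟨i, a⟩)
          = star (fun a => x ⟨k, a⟩) ⬝ᵥ (D k *ᵥ fun a => x ⟨k, a⟩) := by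
        rw [Finset.sum_eq_single k (fun j _ hj => by
          have : (fun a => x ⟨j, a⟩) = 0 := hxo j hj
          rw [this]; simp) (by simp)]
      rw [hsplit, hDdef, quad_sum17]
      have hge : star (fun a => x ⟨k, a⟩) ⬝ᵥ ((ψ k k (Xb k)) *ᵥ fun a => x ⟨k, a⟩)
          ≤ ∑ k', star (fun a => x ⟨k, a⟩) ⬝ᵥ ((ψ k k' (Xb k')) *ᵥ fun a => x ⟨k, a⟩) :=
        Finset.single_le_sum (fun k' _ => (hψpsd k k').dotProduct_mulVec_nonneg _) (Finset.mem_univ k)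
      have hpospart := (hdiag k (Xb k) (hXb k) hknz).dotProduct_mulVec_pos hxk
      rw [Matrix.add_mulVec, dotProduct_add] at hpospart
      calc (0:ℂ) < star (fun a => x ⟨k, a⟩) ⬝ᵥ (Xb k *ᵥ fun a => x ⟨k, a⟩)
            + star (fun a => x ⟨k, a⟩) ⬝ᵥ ((ψ k k (Xb k)) *ᵥ fun a => x ⟨k, a⟩) := hpospart
        _ ≤ _ := by exact add_le_add_right hge _
end

section
/- Let τ be a completely positive map on the finite dimensional C*-algebra A = M_{n₁}(ℂ) ⊕ ⋯ ⊕ M_{n_d}(ℂ) ⊂ M_m(ℂ), m = n₁+⋯+n_d, and suppose τ(X) = Σ_{i=1}^p A_i* X A_i for all X ∈ A, where A₁,...,A_p ∈ M_m(ℂ) generate M_m(ℂ) as an algebra. Then τ is irreducible: there is no nontrivial projection P ∈ A with τ(pAp) ⊆ pAp (equivalently τ(P) ≤ λP for some λ > 0). -/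
open scoped ComplexOrder
open Matrix

/-- If a CP map `τ(X) = Σ Aᵢ* X Aᵢ` on the block-diagonal C*-algebra
`A = M_{n₁} ⊕ ⋯ ⊕ M_{n_d} ⊆ M_m(ℂ)` has Kraus coefficients `Aᵢ ∈ M_m(ℂ)` generating
`M_m(ℂ)` as an algebra, then `τ` is irreducible: there is no nontrivial projection `P ∈ A`
with `τ(P) ≤ λ P` for some `λ > 0`. -/
theorem stmt18 {d p : ℕ} (n : Fin d → ℕ)
    (A : Fin p → Matrix (Σ i, Fin (n i)) (Σ i, Fin (n i)) ℂ)
    (hgen : Algebra.adjoin ℂ (Set.range A) = ⊤)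
    (hτA : ∀ X : Matrix (Σ i, Fin (n i)) (Σ i, Fin (n i)) ℂ,
      (∀ a b, a.1 ≠ b.1 → X a b = 0) →
        ∀ a b, a.1 ≠ b.1 → (∑ i, (A i)ᴴ * X * A i) a b = 0) :
    ¬∃ P : Matrix (Σ i, Fin (n i)) (Σ i, Fin (n i)) ℂ,
      (∀ a b, a.1 ≠ b.1 → P a b = 0) ∧ P.IsHermitian ∧ P * P = P ∧
      P ≠ 0 ∧ P ≠ 1 ∧
      ∃ lam : ℝ, 0 < lam ∧ ((lam : ℂ) • P - ∑ i, (A i)ᴴ * P * A i).PosSemidef := by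
  classical
  rintro ⟨P, -, hP, hP2, hP0, hP1, lam, hlam, hpsd⟩
  obtain ⟨Q, hQdef⟩ : ∃ Q : Matrix (Σ i, Fin (n i)) (Σ i, Fin (n i)) ℂ, Q = 1 - P := ⟨_, rfl⟩
  have hPQ : P * Q = 0 := by
    rw [hQdef, Matrix.mul_sub, Matrix.mul_one, hP2, sub_self]
  have hQP : Q * P = 0 := by
    rw [hQdef, Matrix.sub_mul, Matrix.one_mul, hP2, sub_self]
  have hQH : Qᴴ = Q := by
    rw [hQdef]
    simp [conjTranspose_sub, hP.eq]
  -- the conjugated operator is negative PSD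
  have hN : (Qᴴ * ((lam : ℂ) • P - ∑ i, (A i)ᴴ * P * A i) * Q).PosSemidef :=
    hpsd.conjTranspose_mul_mul_same Q
  have hNeq : Qᴴ * ((lam : ℂ) • P - ∑ i, (A i)ᴴ * P * A i) * Q
      = - ∑ i, (P * A i * Q)ᴴ * (P * A i * Q) := by
    have h1 : Q * ((lam : ℂ) • P) * Q = 0 := by
      rw [Matrix.mul_smul, Matrix.smul_mul, hQP]
      simp
    have e1 : Qᴴ * ((lam : ℂ) • P - ∑ i, (A i)ᴴ * P * A i) * Q
        = Q * ((lam : ℂ) • P) * Q - Q * (∑ i, (A i)ᴴ * P * A i) * Q := by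
      rw [hQH]
      noncomm_ring
    rw [e1, h1, zero_sub, neg_inj]
    rw [Finset.mul_sum, Finset.sum_mul]
    refine Finset.sum_congr rfl fun i _ => ?_
    simp only [conjTranspose_mul, hQH, hP.eq, conjTranspose_conjTranspose]
    calc Q * ((A i)ᴴ * P * A i) * Q
        = Q * (A i)ᴴ * (P * P) * (A i * Q) := by rw [hP2]; noncomm_ring
      _ = Q * (A i)ᴴ * P * (P * A i * Q) := by noncomm_ring
      _ = _ := by noncomm_ring
  rw [hNeq] at hN
  -- each Kraus coefficient satisfies P * A i * Q = 0
  have hkey : ∀ i, P * A i * Q = 0 := by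
    intro i
    rw [← Matrix.conjTranspose_mul_self_eq_zero]
    have hBpsd : ∀ j, ((P * A j * Q)ᴴ * (P * A j * Q)).PosSemidef := fun j =>
      Matrix.posSemidef_conjTranspose_mul_self _
    -- show ((P * A i * Q)ᴴ * (P * A i * Q)) *ᵥ x = 0 for all x, hence B i = 0
    have hvec : ∀ x : (Σ i, Fin (n i)) → ℂ, ((P * A i * Q)ᴴ * (P * A i * Q)) *ᵥ x = 0 := by
      intro x
      have hsum : ∑ j, star x ⬝ᵥ (((P * A j * Q)ᴴ * (P * A j * Q)) *ᵥ x) = 0 := by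
        have hle : star x ⬝ᵥ ((- ∑ j, (P * A j * Q)ᴴ * (P * A j * Q)) *ᵥ x) ≥ 0 := hN.dotProduct_mulVec_nonneg x
        have : star x ⬝ᵥ ((∑ j, (P * A j * Q)ᴴ * (P * A j * Q)) *ᵥ x) ≤ 0 := by
          rw [← neg_nonneg, ← dotProduct_neg, ← neg_mulVec]
          exact hle
        have hmv : (∑ j, (P * A j * Q)ᴴ * (P * A j * Q)) *ᵥ x = ∑ j, (((P * A j * Q)ᴴ * (P * A j * Q)) *ᵥ x) := by
          ext a
          simp only [Matrix.mulVec, dotProduct, Matrix.sum_apply, Finset.sum_apply,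
            Finset.sum_mul]
          exact Finset.sum_comm
        have h2 : star x ⬝ᵥ ((∑ j, (P * A j * Q)ᴴ * (P * A j * Q)) *ᵥ x) = ∑ j, star x ⬝ᵥ (((P * A j * Q)ᴴ * (P * A j * Q)) *ᵥ x) := by
          rw [hmv]
          simp only [dotProduct, Finset.sum_apply, Finset.mul_sum]
          exact Finset.sum_comm
        have h3 : 0 ≤ ∑ j, star x ⬝ᵥ (((P * A j * Q)ᴴ * (P * A j * Q)) *ᵥ x) :=
          Finset.sum_nonneg fun j _ => (hBpsd j).dotProduct_mulVec_nonneg x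
        exact le_antisymm (h2 ▸ this) h3
      have heach : star x ⬝ᵥ (((P * A i * Q)ᴴ * (P * A i * Q)) *ᵥ x) = 0 :=
        (Finset.sum_eq_zero_iff_of_nonneg (fun j _ => (hBpsd j).dotProduct_mulVec_nonneg x)).mp hsum i
          (Finset.mem_univ i)
      exact ((hBpsd i).dotProduct_mulVec_zero_iff x).mp heach
    ext a b
    have := congr_fun (hvec (Pi.single b 1)) a
    simpa using this
  -- the matrices X with P * X * Q = 0 form a subalgebra containing all A i
  let S : Subalgebra ℂ (Matrix (Σ i, Fin (n i)) (Σ i, Fin (n i)) ℂ) :=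
  { carrier := {X | P * X * Q = 0}
    mul_mem' := by
      intro X Y hX hY
      have hPQ1 : P + Q = 1 := by simp [hQdef]
      show P * (X * Y) * Q = 0
      calc P * (X * Y) * Q = P * X * (P + Q) * Y * Q := by rw [hPQ1]; noncomm_ring
        _ = P * X * P * (Y * Q) + P * X * Q * (Y * Q) := by noncomm_ring
        _ = P * X * P * (Y * Q) + 0 := by rw [hX, Matrix.zero_mul]
        _ = (P * X * P) * Y * Q := by rw [add_zero]; noncomm_ring
        _ = P * X * (P * Y * Q) := by noncomm_ring
        _ = 0 := by rw [hY, Matrix.mul_zero]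
    add_mem' := by
      intro X Y hX hY
      show P * (X + Y) * Q = 0
      rw [Matrix.mul_add, Matrix.add_mul, hX, hY, add_zero]
    one_mem' := by
      show P * 1 * Q = 0
      rw [Matrix.mul_one, hPQ]
    zero_mem' := by
      show P * 0 * Q = 0
      rw [Matrix.mul_zero, Matrix.zero_mul]
    algebraMap_mem' := by
      intro c
      show P * (algebraMap ℂ (Matrix (Σ i, Fin (n i)) (Σ i, Fin (n i)) ℂ) c) * Q = 0
      rw [Algebra.algebraMap_eq_smul_one, Matrix.mul_smul, Matrix.mul_one,
        Matrix.smul_mul, hPQ, smul_zero] }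
  have hSle : Algebra.adjoin ℂ (Set.range A) ≤ S := by
    apply Algebra.adjoin_le
    rintro _ ⟨i, rfl⟩
    exact hkey i
  have hall : ∀ X : Matrix (Σ i, Fin (n i)) (Σ i, Fin (n i)) ℂ, P * X * Q = 0 := by
    intro X
    have : X ∈ S := hSle (hgen ▸ Algebra.mem_top)
    exact this
  -- derive a contradiction from P ≠ 0 and Q ≠ 0
  obtain ⟨a, c, hac⟩ : ∃ a c, P a c ≠ 0 := by
    by_contra h
    push_neg at h
    exact hP0 (Matrix.ext fun a c => h a c)
  have hQ0 : Q ≠ 0 := by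
    intro h
    apply hP1
    have := sub_eq_zero.mp (hQdef ▸ h)
    exact this.symm
  obtain ⟨c', b, hcb⟩ : ∃ c' b, Q c' b ≠ 0 := by
    by_contra h
    push_neg at h
    exact hQ0 (Matrix.ext fun c' b => h c' b)
  have hX := hall (single c c' (1 : ℂ))
  have hentry : (P * single c c' (1 : ℂ) * Q) a b = P a c * Q c' b := by
    rw [Matrix.mul_assoc, Matrix.mul_apply]
    rw [Finset.sum_eq_single c]
    · rw [Matrix.single_mul_apply_same, one_mul]
    · intro k _ hk
      rw [Matrix.single_mul_apply_of_ne (h := hk), mul_zero]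
    · intro h
      exact absurd (Finset.mem_univ c) h
  rw [hX] at hentry
  simp only [Matrix.zero_apply] at hentry
  exact absurd hentry.symm (mul_ne_zero hac hcb)
end
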